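/- Decay-norm bound for the solution of the homological equation: let d ≥ 1, τ > 0, γ > 0, N ≥ 2, ω ∈ ℝ^d, and let μ_{σ,j} ∈ ℂ be given for (σ,j) ∈ {−1,+1}×ℤ_{≥1}. For (σ,j), (σ',j') and ℓ ∈ ℤ^d set d_{σ,j}^{σ',j'}(ℓ) := iω·ℓ + μ_{σ,j} − μ_{σ',j'}, and assume the lower bounds: |d_{σ,j}^{σ',j'}(ℓ)| ≥ γ(j²+j'²)⟨ℓ⟩^{−τ} if σ ≠ σ'; |d_{σ,j}^{σ',j'}(ℓ)| ≥ γ(j+j')⟨ℓ⟩^{−τ} if σ = σ' and j ≠ j'; |d_{σ,j}^{σ,j}(ℓ)| ≥ γ⟨ℓ⟩^{−τ} if ℓ ≠ 0; for all |ℓ| ≤ N. Let E₁, E₀ be Töplitz-in-time matrices (entries E_{σ,j}^{σ',j'}(ℓ)) with (E₁)_{σ,j}^{σ,j'}(ℓ) = 0 for all σ, j, j', ℓ, and set R_{σ,j}^{σ',j'}(ℓ) := (E₁)_{σ,j}^{σ',j'}(ℓ)·j' + (E₀)_{σ,j}^{σ',j'}(ℓ). Define Ψ by Ψ_{σ,j}^{σ',j'}(ℓ)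 := −R_{σ,j}^{σ',j'}(ℓ)/d_{σ,j}^{σ',j'}(ℓ) whenever |ℓ| ≤ N and (σ,j,ℓ) ≠ (σ',j',0), and Ψ_{σ,j}^{σ',j'}(ℓ) := 0 otherwise. Then for every s ≥ 0: |Ψ|_s ≤ C γ^{−1} N^{τ} ( |E₁|_s + |E₀|_s ) for a constant C depending only on τ. -/

import Mathlib

open scoped ENNReal NNReal

/-- The weight `⟨(h,ℓ)⟩ = max(1,|(h,ℓ)|)` (`|·|` the sup norm) of `(h,ℓ) ∈ ℤ × ℤᵈ`. -/
noncomputable def hwt {d : ℕ} (h : ℤ × (Fin d → ℤ)) : ℝ≥0∞ :=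
  ((max 1 (max h.1.natAbs (Finset.univ.sup fun i => (h.2 i).natAbs)) : ℕ) : ℝ≥0∞)

/-- The `s`-decay norm of a Töplitz-in-time matrix indexed by
`{−1,+1} × ℤ_{≥1} × ℤᵈ`, given through its coefficients `A_{σ,j}^{σ',j'}(ℓ)`. -/
noncomputable def tnorm (d : ℕ) (s : ℝ)
    (A : Bool → ℕ → Bool → ℕ → (Fin d → ℤ) → ℂ) : ℝ≥0∞ :=
  (⨆ σ : Bool, ⨆ σ' : Bool,
    ∑' h : ℤ × (Fin d → ℤ),
      hwt h ^ (2 * s) *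
        (⨆ p : {q : ℕ × ℕ // (q.1 : ℤ) - (q.2 : ℤ) = h.1 ∧ 1 ≤ q.1 ∧ 1 ≤ q.2},
          (‖A σ (p : ℕ × ℕ).1 σ' (p : ℕ × ℕ).2 h.2‖₊ : ℝ≥0∞)) ^ (2 : ℕ)) ^ (1 / 2 : ℝ)

private lemma ennreal_sq_add_le (a b : ENNReal) : (a + b) ^ (2:ℕ) ≤ 4 * (a ^ (2:ℕ) + b ^ (2:ℕ)) := by
  rcases le_total a b with h|h
  · calc (a+b)^2 ≤ (b+b)^2 := by gcongr
    _ = 4*b^2 := by ring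
    _ ≤ 4*(a^2+b^2) := by gcongr; exact le_add_self
  · calc (a+b)^2 ≤ (a+a)^2 := by gcongr
    _ = 4*a^2 := by ring
    _ ≤ 4*(a^2+b^2) := by gcongr; exact le_self_add

/-- Decay-norm bound for the solution of the homological equation: under the
second Melnikov lower bounds on the divisors `d_{σ,j}^{σ',j'}(ℓ) = iω·ℓ + μ_{σ,j} −
μ_{σ',j'}`, the solution `Ψ = −R/d` (truncated to `|ℓ| ≤ N`, with
`R = E₁ D + E₀`, `D = diag(j)`) satisfies `|Ψ|ₛ ≤ C γ⁻¹ N^τ (|E₁|ₛ + |E₀|ₛ)`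
with `C = C(τ)`. -/
theorem homological_equation_decay_bound (τ : ℝ) (hτ : 0 < τ) :
    ∃ C : ℝ, 0 < C ∧
      ∀ (d : ℕ), 1 ≤ d →
      ∀ (γ : ℝ), 0 < γ →
      ∀ (N : ℕ), 2 ≤ N →
      ∀ (ω : Fin d → ℝ) (μ : Bool → ℕ → ℂ)
        (E₁ E₀ Ψ : Bool → ℕ → Bool → ℕ → (Fin d → ℤ) → ℂ),
        -- lower bound on the divisors, case σ ≠ σ'
        (∀ (σ σ' : Bool) (j j' : ℕ) (ℓ : Fin d → ℤ), 1 ≤ j → 1 ≤ j' →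
          (Finset.univ.sup fun t => (ℓ t).natAbs) ≤ N → σ ≠ σ' →
          γ * ((j : ℝ) ^ 2 + (j' : ℝ) ^ 2) /
              ((max 1 (Finset.univ.sup fun t => (ℓ t).natAbs) : ℕ) : ℝ) ^ τ ≤
            ‖Complex.I * ((∑ i, ω i * (ℓ i : ℝ) : ℝ) : ℂ) + μ σ j - μ σ' j'‖) →
        -- lower bound, case σ = σ', j ≠ j'
        (∀ (σ : Bool) (j j' : ℕ) (ℓ : Fin d → ℤ), 1 ≤ j → 1 ≤ j' → j ≠ j' →
          (Finset.univ.sup fun t => (ℓ t).natAbs) ≤ N →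
          γ * ((j : ℝ) + (j' : ℝ)) /
              ((max 1 (Finset.univ.sup fun t => (ℓ t).natAbs) : ℕ) : ℝ) ^ τ ≤
            ‖Complex.I * ((∑ i, ω i * (ℓ i : ℝ) : ℝ) : ℂ) + μ σ j - μ σ j'‖) →
        -- lower bound, case σ = σ', j = j', ℓ ≠ 0
        (∀ (σ : Bool) (j : ℕ) (ℓ : Fin d → ℤ), 1 ≤ j → ℓ ≠ 0 →
          (Finset.univ.sup fun t => (ℓ t).natAbs) ≤ N →
          γ / ((max 1 (Finset.univ.sup fun t => (ℓ t).natAbs) : ℕ) : ℝ) ^ τ ≤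
            ‖Complex.I * ((∑ i, ω i * (ℓ i : ℝ) : ℝ) : ℂ)‖) →
        -- E₁ has no diagonal (in σ) part
        (∀ (σ : Bool) (j j' : ℕ) (ℓ : Fin d → ℤ), E₁ σ j σ j' ℓ = 0) →
        -- definition of Ψ
        (∀ (σ σ' : Bool) (j j' : ℕ) (ℓ : Fin d → ℤ), 1 ≤ j → 1 ≤ j' →
          Ψ σ j σ' j' ℓ =
            if (Finset.univ.sup fun t => (ℓ t).natAbs) ≤ N ∧ ¬(σ = σ' ∧ j = j' ∧ ℓ = 0)
            then -(E₁ σ j σ' j' ℓ * (j' : ℂ) + E₀ σ j σ' j' ℓ) /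
                (Complex.I * ((∑ i, ω i * (ℓ i : ℝ) : ℝ) : ℂ) + μ σ j - μ σ' j')
            else 0) →
        ∀ s : ℝ, 0 ≤ s →
          tnorm d s Ψ ≤
            ENNReal.ofReal (C / γ * (N : ℝ) ^ τ) * (tnorm d s E₁ + tnorm d s E₀) := by
  refine ⟨2, two_pos, ?_⟩
  intro d hd γ hγ N hN ω μ E₁ E₀ Ψ h1 h2 h3 hE₁ hΨ s hs
  have hN0 : (0:ℝ) < N := by positivity
  have hNt : (0:ℝ) < (N:ℝ) ^ τ := Real.rpow_pos_of_pos hN0 τ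
  -- pointwise real bound
  have key : ∀ (σ σ' : Bool) (j j' : ℕ), 1 ≤ j → 1 ≤ j' → ∀ ℓ : Fin d → ℤ,
      ‖Ψ σ j σ' j' ℓ‖ ≤ (N:ℝ) ^ τ / γ * (‖E₁ σ j σ' j' ℓ‖ + ‖E₀ σ j σ' j' ℓ‖) := by
    intro σ σ' j j' hj hj' ℓ
    have hj1 : (1:ℝ) ≤ (j:ℝ) := by exact_mod_cast hj
    have hj'1 : (1:ℝ) ≤ (j':ℝ) := by exact_mod_cast hj'
    rw [hΨ σ σ' j j' ℓ hj hj']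
    split_ifs with hc
    · obtain ⟨hℓN, hne⟩ := hc
      set M : ℝ := ((max 1 (Finset.univ.sup fun t => (ℓ t).natAbs) : ℕ) : ℝ) with hMdef
      have hM1 : (1:ℝ) ≤ M := by
        rw [hMdef]; exact_mod_cast Nat.one_le_iff_ne_zero.mpr (by positivity)
      have hMN : M ≤ (N:ℝ) := by
        rw [hMdef]
        exact_mod_cast max_le (by omega) hℓN
      have hMt : M ^ τ ≤ (N:ℝ) ^ τ := Real.rpow_le_rpow (by linarith) hMN hτ.le
      have hMtpos : (0:ℝ) < M ^ τ := Real.rpow_pos_of_pos (by linarith) τ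
      set den : ℂ := Complex.I * ((∑ i, ω i * (ℓ i : ℝ) : ℝ) : ℂ) + μ σ j - μ σ' j' with hden_def
      obtain ⟨B, hB1, hden, hE1B⟩ :
          ∃ B : ℝ, 1 ≤ B ∧ γ * B / M ^ τ ≤ ‖den‖ ∧
            ‖E₁ σ j σ' j' ℓ‖ * (j':ℝ) ≤ ‖E₁ σ j σ' j' ℓ‖ * B := by
        by_cases hσ : σ = σ'
        · subst hσ
          have hz : E₁ σ j σ j' ℓ = 0 := hE₁ σ j j' ℓ
          by_cases hjj : j = j'
          · subst hjj
            have hℓ0 : ℓ ≠ 0 := by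
              intro h0; exact hne ⟨rfl, rfl, h0⟩
            refine ⟨1, le_refl 1, ?_, by simp [hz]⟩
            have h := h3 σ j ℓ hj hℓ0 hℓN
            have hdeq : den = Complex.I * ((∑ i, ω i * (ℓ i : ℝ) : ℝ) : ℂ) := by
              rw [hden_def]; ring
            rw [hdeq, mul_one]
            exact h
          · exact ⟨(j:ℝ) + (j':ℝ), by linarith, h2 σ j j' ℓ hj hj' hjj hℓN, by simp [hz]⟩
        · refine ⟨(j:ℝ)^2 + (j':ℝ)^2, by nlinarith, h1 σ σ' j j' ℓ hj hj' hℓN hσ, ?_⟩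
          have hle : (j':ℝ) ≤ (j:ℝ)^2 + (j':ℝ)^2 := by nlinarith
          exact mul_le_mul_of_nonneg_left hle (norm_nonneg _)
      have hB0 : (0:ℝ) < B := by linarith
      rw [norm_div, norm_neg]
      have hnum : ‖E₁ σ j σ' j' ℓ * (j':ℂ) + E₀ σ j σ' j' ℓ‖ ≤
          (‖E₁ σ j σ' j' ℓ‖ + ‖E₀ σ j σ' j' ℓ‖) * B := by
        calc ‖E₁ σ j σ' j' ℓ * (j':ℂ) + E₀ σ j σ' j' ℓ‖
            ≤ ‖E₁ σ j σ' j' ℓ * (j':ℂ)‖ + ‖E₀ σ j σ' j' ℓ‖ := norm_add_le _ _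
        _ = ‖E₁ σ j σ' j' ℓ‖ * (j':ℝ) + ‖E₀ σ j σ' j' ℓ‖ := by
            rw [norm_mul, Complex.norm_natCast]
        _ ≤ ‖E₁ σ j σ' j' ℓ‖ * B + ‖E₀ σ j σ' j' ℓ‖ * B :=
            add_le_add hE1B (le_mul_of_one_le_right (norm_nonneg _) hB1)
        _ = (‖E₁ σ j σ' j' ℓ‖ + ‖E₀ σ j σ' j' ℓ‖) * B := by ring
      calc ‖E₁ σ j σ' j' ℓ * (j':ℂ) + E₀ σ j σ' j' ℓ‖ / ‖den‖
          ≤ ((‖E₁ σ j σ' j' ℓ‖ + ‖E₀ σ j σ' j' ℓ‖) * B) / (γ * B / M ^ τ) := by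
            apply div_le_div₀ (by positivity) hnum (by positivity)
            exact hden
      _ = M ^ τ / γ * (‖E₁ σ j σ' j' ℓ‖ + ‖E₀ σ j σ' j' ℓ‖) := by
            field_simp
      _ ≤ (N:ℝ) ^ τ / γ * (‖E₁ σ j σ' j' ℓ‖ + ‖E₀ σ j σ' j' ℓ‖) := by
            gcongr
    · simp only [norm_zero]
      positivity
  -- ENNReal pointwise bound
  set K : ENNReal := ENNReal.ofReal ((N:ℝ) ^ τ / γ) with hK
  have keyE : ∀ (σ σ' : Bool) (j j' : ℕ), 1 ≤ j → 1 ≤ j' → ∀ ℓ : Fin d → ℤ,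
      (‖Ψ σ j σ' j' ℓ‖₊ : ENNReal) ≤ K * ((‖E₁ σ j σ' j' ℓ‖₊ : ENNReal) + ‖E₀ σ j σ' j' ℓ‖₊) := by
    intro σ σ' j j' hj hj' ℓ
    calc (‖Ψ σ j σ' j' ℓ‖₊ : ENNReal) = ENNReal.ofReal ‖Ψ σ j σ' j' ℓ‖ :=
          (ofReal_norm _).symm
    _ ≤ ENNReal.ofReal ((N:ℝ) ^ τ / γ * (‖E₁ σ j σ' j' ℓ‖ + ‖E₀ σ j σ' j' ℓ‖)) :=
          ENNReal.ofReal_le_ofReal (key σ σ' j j' hj hj' ℓ)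
    _ = K * ((‖E₁ σ j σ' j' ℓ‖₊ : ENNReal) + ‖E₀ σ j σ' j' ℓ‖₊) := by
          rw [ENNReal.ofReal_mul (by positivity),
            ENNReal.ofReal_add (norm_nonneg _) (norm_nonneg _),
            ofReal_norm, ofReal_norm]
          rfl
  -- main estimate
  set F : Bool → Bool → (Bool → ℕ → Bool → ℕ → (Fin d → ℤ) → ℂ) → ℤ × (Fin d → ℤ) → ENNReal :=
    fun σ σ' A h => ⨆ p : {q : ℕ × ℕ // (q.1 : ℤ) - (q.2 : ℤ) = h.1 ∧ 1 ≤ q.1 ∧ 1 ≤ q.2},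
      (‖A σ (p : ℕ × ℕ).1 σ' (p : ℕ × ℕ).2 h.2‖₊ : ENNReal) with hF
  have hFΨ : ∀ σ σ' h, F σ σ' Ψ h ≤ K * (F σ σ' E₁ h + F σ σ' E₀ h) := by
    intro σ σ' h
    refine iSup_le fun p => ?_
    refine le_trans (keyE σ σ' (p : ℕ × ℕ).1 (p : ℕ × ℕ).2 p.2.2.1 p.2.2.2 h.2) ?_
    gcongr
    · exact le_iSup (fun p : {q : ℕ × ℕ // (q.1 : ℤ) - (q.2 : ℤ) = h.1 ∧ 1 ≤ q.1 ∧ 1 ≤ q.2} =>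
        (‖E₁ σ (p : ℕ × ℕ).1 σ' (p : ℕ × ℕ).2 h.2‖₊ : ENNReal)) p
    · exact le_iSup (fun p : {q : ℕ × ℕ // (q.1 : ℤ) - (q.2 : ℤ) = h.1 ∧ 1 ≤ q.1 ∧ 1 ≤ q.2} =>
        (‖E₀ σ (p : ℕ × ℕ).1 σ' (p : ℕ × ℕ).2 h.2‖₊ : ENNReal)) p
  set S : Bool → Bool → (Bool → ℕ → Bool → ℕ → (Fin d → ℤ) → ℂ) → ENNReal :=
    fun σ σ' A => ∑' h : ℤ × (Fin d → ℤ), hwt h ^ (2 * s) * (F σ σ' A h) ^ (2:ℕ) with hS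
  have htn : ∀ A, tnorm d s A = (⨆ σ : Bool, ⨆ σ' : Bool, S σ σ' A) ^ (1/2 : ℝ) := by
    intro A; rfl
  have hsum : ∀ σ σ', S σ σ' Ψ ≤ (2 * K) ^ (2:ℕ) *
      ((⨆ σ : Bool, ⨆ σ' : Bool, S σ σ' E₁) + (⨆ σ : Bool, ⨆ σ' : Bool, S σ σ' E₀)) := by
    intro σ σ'
    calc S σ σ' Ψ ≤ ∑' h : ℤ × (Fin d → ℤ),
        ((2*K)^(2:ℕ) * (hwt h ^ (2*s) * (F σ σ' E₁ h)^(2:ℕ)) +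
         (2*K)^(2:ℕ) * (hwt h ^ (2*s) * (F σ σ' E₀ h)^(2:ℕ))) := by
          refine ENNReal.tsum_le_tsum fun h => ?_
          calc hwt h ^ (2*s) * (F σ σ' Ψ h)^(2:ℕ)
              ≤ hwt h ^ (2*s) * (K * (F σ σ' E₁ h + F σ σ' E₀ h))^(2:ℕ) := by
                gcongr; exact hFΨ σ σ' h
          _ = hwt h ^ (2*s) * (K^(2:ℕ) * (F σ σ' E₁ h + F σ σ' E₀ h)^(2:ℕ)) := by rw [mul_pow]
          _ ≤ hwt h ^ (2*s) * (K^(2:ℕ) * (4 * ((F σ σ' E₁ h)^(2:ℕ) + (F σ σ' E₀ h)^(2:ℕ)))) := by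
                gcongr
                exact ennreal_sq_add_le _ _
          _ = (2*K)^(2:ℕ) * (hwt h ^ (2*s) * (F σ σ' E₁ h)^(2:ℕ)) +
              (2*K)^(2:ℕ) * (hwt h ^ (2*s) * (F σ σ' E₀ h)^(2:ℕ)) := by ring
    _ = (2 * K) ^ (2:ℕ) * (S σ σ' E₁ + S σ σ' E₀) := by
          rw [ENNReal.tsum_add, ENNReal.tsum_mul_left, ENNReal.tsum_mul_left, mul_add]
    _ ≤ (2 * K) ^ (2:ℕ) *
        ((⨆ σ : Bool, ⨆ σ' : Bool, S σ σ' E₁) + (⨆ σ : Bool, ⨆ σ' : Bool, S σ σ' E₀)) := by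
          gcongr
          · exact le_iSup_of_le σ (le_iSup_of_le σ' le_rfl)
          · exact le_iSup_of_le σ (le_iSup_of_le σ' le_rfl)
  have hhalf : (0:ℝ) ≤ 1/2 := by norm_num
  rw [htn Ψ, htn E₁, htn E₀]
  calc ((⨆ σ : Bool, ⨆ σ' : Bool, S σ σ' Ψ)) ^ (1/2 : ℝ)
      ≤ ((2*K)^(2:ℕ) *
        ((⨆ σ : Bool, ⨆ σ' : Bool, S σ σ' E₁) + (⨆ σ : Bool, ⨆ σ' : Bool, S σ σ' E₀))) ^ (1/2 : ℝ) := by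
        refine ENNReal.rpow_le_rpow ?_ hhalf
        exact iSup_le fun σ => iSup_le fun σ' => hsum σ σ'
  _ = ((2*K)^(2:ℕ)) ^ (1/2 : ℝ) *
        ((⨆ σ : Bool, ⨆ σ' : Bool, S σ σ' E₁) + (⨆ σ : Bool, ⨆ σ' : Bool, S σ σ' E₀)) ^ (1/2 : ℝ) :=
        ENNReal.mul_rpow_of_nonneg _ _ hhalf
  _ = (2*K) *
        ((⨆ σ : Bool, ⨆ σ' : Bool, S σ σ' E₁) + (⨆ σ : Bool, ⨆ σ' : Bool, S σ σ' E₀)) ^ (1/2 : ℝ) := by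
        rw [← ENNReal.rpow_natCast (2*K) 2, ← ENNReal.rpow_mul]
        norm_num
  _ ≤ (2*K) * ((⨆ σ : Bool, ⨆ σ' : Bool, S σ σ' E₁) ^ (1/2:ℝ) +
        (⨆ σ : Bool, ⨆ σ' : Bool, S σ σ' E₀) ^ (1/2:ℝ)) := by
        gcongr
        exact ENNReal.rpow_add_le_add_rpow _ _ hhalf (by norm_num)
  _ = ENNReal.ofReal (2 / γ * (N:ℝ) ^ τ) * ((⨆ σ : Bool, ⨆ σ' : Bool, S σ σ' E₁) ^ (1/2:ℝ) +
        (⨆ σ : Bool, ⨆ σ' : Bool, S σ σ' E₀) ^ (1/2:ℝ)) := by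
        congr 1
        rw [hK, ← ENNReal.ofReal_ofNat 2, ← ENNReal.ofReal_mul (by norm_num)]
        congr 1
        field_simp
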